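/- Under hypotheses h1 and h2 on f, the scalar sequence t_0 ∈ (0,ρ), t_{k+1} = |n_f(t_k)| converges to 0 superlinearly: lim_{k→∞} t_{k+1}/t_k = 0. -/

import Mathlib

theorem stmt5 (R : ℝ) (hR : 0 < R) (f f' : ℝ → ℝ)
    (hderiv : ∀ t ∈ Set.Ico (0:ℝ) R, HasDerivWithinAt f (f' t) (Set.Ico 0 R) t)
    (hcont : ContinuousOn f' (Set.Ico 0 R))
    (hf0 : f 0 = 0) (hf'0 : f' 0 = -1)
    (hmono : StrictMonoOn f' (Set.Ico 0 R))
    (ν ρ : ℝ) (hν : ν = sSup {t ∈ Set.Ico 0 R | f' t < 0})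
    (hρ : ρ = sSup {δ : ℝ | δ ∈ Set.Ioo 0 ν ∧ ∀ t ∈ Set.Ioo 0 δ, (f t / f' t - t) / t < 1})
    (t : ℕ → ℝ) (ht0 : t 0 ∈ Set.Ioo 0 ρ)
    (hrec : ∀ k, t (k + 1) = |t k - f (t k) / f' (t k)|) :
    Filter.Tendsto (fun k => t (k + 1) / t k) Filter.atTop (nhds 0) := by
  obtain ⟨ht0pos, ht0ρ⟩ := ht0
  have hρpos : 0 < ρ := lt_trans ht0pos ht0ρ
  -- sets
  have hSne : {t ∈ Set.Ico (0:ℝ) R | f' t < 0}.Nonempty :=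
    ⟨0, ⟨le_rfl, hR⟩, by rw [hf'0]; norm_num⟩
  have hDne : {δ : ℝ | δ ∈ Set.Ioo 0 ν ∧ ∀ t ∈ Set.Ioo 0 δ,
      (f t / f' t - t) / t < 1}.Nonempty := by
    by_contra h
    rw [Set.not_nonempty_iff_eq_empty] at h
    rw [h, Real.sSup_empty] at hρ
    linarith
  have hνR : ν ≤ R := by
    rw [hν]
    exact csSup_le hSne (fun x hx => le_of_lt hx.1.2)
  have hρν : ρ ≤ ν := by
    rw [hρ]
    exact csSup_le hDne (fun δ hδ => le_of_lt hδ.1.2)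
  have key1 : ∀ x, 0 ≤ x → x < ν → f' x < 0 := by
    intro x hx0 hxν
    rw [hν] at hxν
    obtain ⟨s, hsS, hxs⟩ := exists_lt_of_lt_csSup hSne hxν
    have hxI : x ∈ Set.Ico (0:ℝ) R := ⟨hx0, hxs.trans hsS.1.2⟩
    exact lt_trans (hmono hxI hsS.1 hxs) hsS.2
  have key2 : ∀ x ∈ Set.Ioo (0:ℝ) ρ, (f x / f' x - x) / x < 1 := by
    intro x hx
    have := hx.2
    rw [hρ] at this
    obtain ⟨δ, hδD, hxδ⟩ := exists_lt_of_lt_csSup hDne this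
    exact hδD.2 x ⟨hx.1, hxδ⟩
  have hfc : ContinuousOn f (Set.Ico 0 R) :=
    fun x hx => (hderiv x hx).continuousWithinAt
  -- the key step estimate
  have hstep : ∀ x ∈ Set.Ioo (0:ℝ) ρ, 0 < f x / f' x - x ∧ f x / f' x - x < x := by
    intro x hx
    obtain ⟨hx0, hxρ⟩ := hx
    have hxν : x < ν := lt_of_lt_of_le hxρ hρν
    have hxR : x < R := lt_of_lt_of_le hxν hνR
    have hf'x : f' x < 0 := key1 x hx0.le hxν
    have hIcc : Set.Icc 0 x ⊆ Set.Ico 0 R := fun y hy => ⟨hy.1, lt_of_le_of_lt hy.2 hxR⟩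
    obtain ⟨c, hc, hceq⟩ := exists_hasDerivAt_eq_slope f f' hx0 (hfc.mono hIcc)
      (fun c hc => (hderiv c ⟨hc.1.le, hc.2.trans hxR⟩).hasDerivAt
        (Ico_mem_nhds hc.1 (hc.2.trans hxR)))
    rw [hf0, sub_zero, sub_zero] at hceq
    have hfx : f x = x * f' c := by
      rw [hceq]; field_simp
    have hcI : c ∈ Set.Ico (0:ℝ) R := ⟨hc.1.le, hc.2.trans hxR⟩
    have hlt : f' c < f' x := hmono hcI ⟨hx0.le, hxR⟩ hc.2
    have h1 : f x < x * f' x := by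
      rw [hfx]; exact (mul_lt_mul_iff_right₀ hx0).mpr hlt
    refine ⟨sub_pos.mpr ?_, ?_⟩
    · rw [lt_div_iff_of_neg hf'x]
      linarith
    · exact (div_lt_one hx0).mp (key2 x ⟨hx0, hxρ⟩)
  -- membership and recursion without abs
  have hmem : ∀ k, t k ∈ Set.Ioo (0:ℝ) ρ := by
    intro k
    induction k with
    | zero => exact ⟨ht0pos, ht0ρ⟩
    | succ k ih =>
      obtain ⟨h1, h2⟩ := hstep _ ih
      rw [hrec k, abs_sub_comm, abs_of_pos h1]
      exact ⟨h1, h2.trans ih.2⟩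
  have heq : ∀ k, t (k + 1) = f (t k) / f' (t k) - t k := by
    intro k
    rw [hrec k, abs_sub_comm, abs_of_pos (hstep _ (hmem k)).1]
  have hdec : ∀ k, t (k + 1) < t k := by
    intro k
    rw [heq k]
    exact (hstep _ (hmem k)).2
  -- convergence of t to its infimum L
  have hbdd : BddBelow (Set.range t) := ⟨0, fun x ⟨k, hk⟩ => hk ▸ (hmem k).1.le⟩
  have hanti : Antitone t := (strictAnti_nat_of_succ_lt hdec).antitone
  have htL : Filter.Tendsto t Filter.atTop (nhds (⨅ k, t k)) :=
    tendsto_atTop_ciInf hanti hbdd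
  set L := ⨅ k, t k with hLdef
  have hL0 : 0 ≤ L := le_ciInf fun k => (hmem k).1.le
  have hLρ : L < ρ := lt_of_le_of_lt (ciInf_le hbdd 0) ht0ρ
  have hLν : L < ν := lt_of_lt_of_le hLρ hρν
  have hLR : L < R := lt_of_lt_of_le hLν hνR
  have hLIco : L ∈ Set.Ico (0:ℝ) R := ⟨hL0, hLR⟩
  have htkIco : ∀ k, t k ∈ Set.Ico (0:ℝ) R := fun k =>
    ⟨(hmem k).1.le, lt_of_lt_of_le ((hmem k).2.trans_le hρν) hνR⟩
  have htLW : Filter.Tendsto t Filter.atTop (nhdsWithin L (Set.Ico 0 R)) :=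
    tendsto_nhdsWithin_of_tendsto_nhds_of_eventually_within _ htL
      (Filter.Eventually.of_forall htkIco)
  -- L = 0
  have hLzero : L = 0 := by
    by_contra h
    have hLpos : 0 < L := lt_of_le_of_ne hL0 (Ne.symm h)
    have hf'L : f' L < 0 := key1 L hL0 hLν
    have hfL : Filter.Tendsto (fun k => f (t k)) Filter.atTop (nhds (f L)) :=
      (hfc L hLIco).tendsto.comp htLW
    have hf'Lt : Filter.Tendsto (fun k => f' (t k)) Filter.atTop (nhds (f' L)) :=
      (hcont L hLIco).tendsto.comp htLW
    have h2 : Filter.Tendsto (fun k => f (t k) / f' (t k) - t k) Filter.atTop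
        (nhds (f L / f' L - L)) := (hfL.div hf'Lt hf'L.ne).sub htL
    have h3 : Filter.Tendsto (fun k => t (k + 1)) Filter.atTop (nhds L) :=
      htL.comp (Filter.tendsto_add_atTop_nat 1)
    have h4 : Filter.Tendsto (fun k => t (k + 1)) Filter.atTop (nhds (f L / f' L - L)) := by
      simpa only [← heq] using h2
    have h5 : f L / f' L - L = L := tendsto_nhds_unique h4 h3
    have h6 := key2 L ⟨hLpos, hLρ⟩
    rw [h5, div_self hLpos.ne'] at h6
    exact lt_irrefl 1 h6
  have ht0' : Filter.Tendsto t Filter.atTop (nhds 0) := hLzero ▸ htL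
  -- slope of f at 0
  have hd0 : HasDerivWithinAt f (-1) (Set.Ico 0 R) 0 := hf'0 ▸ hderiv 0 ⟨le_rfl, hR⟩
  have hslope := hasDerivWithinAt_iff_tendsto_slope.mp hd0
  have htW0 : Filter.Tendsto t Filter.atTop (nhdsWithin 0 (Set.Ico 0 R \ {0})) :=
    tendsto_nhdsWithin_of_tendsto_nhds_of_eventually_within _ ht0'
      (Filter.Eventually.of_forall fun k => ⟨htkIco k, (hmem k).1.ne'⟩)
  have hnum : Filter.Tendsto (fun k => f (t k) / t k) Filter.atTop (nhds (-1)) := by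
    have h := hslope.comp htW0
    have hfun : (slope f 0) ∘ t = fun k => f (t k) / t k := by
      funext k
      simp [slope_def_field, hf0]
    rwa [hfun] at h
  have htW0' : Filter.Tendsto t Filter.atTop (nhdsWithin 0 (Set.Ico 0 R)) :=
    tendsto_nhdsWithin_of_tendsto_nhds_of_eventually_within _ ht0'
      (Filter.Eventually.of_forall htkIco)
  have hden : Filter.Tendsto (fun k => f' (t k)) Filter.atTop (nhds (-1)) := by
    have h := (hcont 0 ⟨le_rfl, hR⟩).tendsto.comp htW0'
    rwa [hf'0] at h
  -- ratio identity
  have hratio : ∀ k, t (k + 1) / t k = (f (t k) / t k - f' (t k)) / f' (t k) := by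
    intro k
    have hpos := (hmem k).1
    have hne : f' (t k) ≠ 0 := (key1 _ hpos.le ((hmem k).2.trans_le hρν)).ne
    rw [heq k]
    field_simp
  have hmain : Filter.Tendsto (fun k => (f (t k) / t k - f' (t k)) / f' (t k))
      Filter.atTop (nhds 0) := by
    have h := (hnum.sub hden).div hden (by norm_num : (-1:ℝ) ≠ 0)
    simpa [Pi.div_def] using h
  simpa only [hratio] using hmain
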